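/- Let 2 ≤ r < ∞ and let T : X → Y be a bounded linear operator between Banach spaces that is absolutely (r,2)-summing. Then for every n ∈ ℕ, the n-th Weyl number satisfies x_n(T) ≤ n^{−1/r} · π_{r,2}(T). -/

import Mathlib

set_option maxHeartbeats 1000000

noncomputable section

open scoped ENNReal

open scoped RealInnerProductSpace

/-- The `n`-th approximation number. -/
def approxNumber {X Y : Type*} [NormedAddCommGroup X] [NormedSpace ℝ X]
    [NormedAddCommGroup Y] [NormedSpace ℝ Y] (n : ℕ) (T : X →L[ℝ] Y) : ℝ :=
  sInf {c : ℝ | ∃ A : X →L[ℝ] Y, FiniteDimensional ℝ (LinearMap.range (A : X →ₗ[ℝ] Y)) ∧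
    Module.finrank ℝ (LinearMap.range (A : X →ₗ[ℝ] Y)) < n ∧ ‖T - A‖ = c}

/-- The Hilbert sequence space `ℓ₂`. -/
abbrev Ell2 : Type := lp (fun _ : ℕ => ℝ) 2

/-- The `n`-th Weyl number. -/
def weylNumber {X Y : Type*} [NormedAddCommGroup X] [NormedSpace ℝ X]
    [NormedAddCommGroup Y] [NormedSpace ℝ Y] (n : ℕ) (T : X →L[ℝ] Y) : ℝ :=
  ⨆ A : {A : Ell2 →L[ℝ] X // ‖A‖ ≤ 1}, approxNumber n (T.comp A.1)

/-- `T` is absolutely `(r,s)`-summing with constant `C`. -/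
def IsAbsSumming {X Y : Type*} [NormedAddCommGroup X] [NormedSpace ℝ X]
    [NormedAddCommGroup Y] [NormedSpace ℝ Y]
    (r s : ℝ) (T : X →L[ℝ] Y) (C : ℝ) : Prop :=
  ∀ (k : ℕ) (x : Fin k → X),
    (∑ j, ‖T (x j)‖ ^ r) ^ (1 / r) ≤
      C * ⨆ f : {f : X →L[ℝ] ℝ // ‖f‖ ≤ 1}, (∑ j, |f.1 (x j)| ^ s) ^ (1 / s)

/-- The absolutely `(r,s)`-summing norm `π_{r,s}(T)`. -/
def summingNorm {X Y : Type*} [NormedAddCommGroup X] [NormedSpace ℝ X]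
    [NormedAddCommGroup Y] [NormedSpace ℝ Y] (r s : ℝ) (T : X →L[ℝ] Y) : ℝ :=
  sInf {C : ℝ | 0 ≤ C ∧ IsAbsSumming r s T C}

lemma orthonormal_snoc {E : Type*} [NormedAddCommGroup E] [InnerProductSpace ℝ E] {k : ℕ}
    {e : Fin k → E} (he : Orthonormal ℝ e) {x : E} (hx : ‖x‖ = 1)
    (hp : ∀ j, ⟪e j, x⟫ = 0) : Orthonormal ℝ (Fin.snoc e x) := by
  rw [orthonormal_iff_ite] at he ⊢
  intro i j
  refine Fin.lastCases ?_ (fun i' => ?_) i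
  · refine Fin.lastCases ?_ (fun j' => ?_) j
    · simp [Fin.snoc_last, real_inner_self_eq_norm_sq, hx]
    · have hne : Fin.last k ≠ Fin.castSucc j' := (Fin.castSucc_lt_last j').ne'
      simp only [Fin.snoc_castSucc, Fin.snoc_last, hne, if_false]
      rw [real_inner_comm]
      exact hp j'
  · refine Fin.lastCases ?_ (fun j' => ?_) j
    · have hne : Fin.castSucc i' ≠ Fin.last k := (Fin.castSucc_lt_last i').ne
      simp [Fin.snoc_last, Fin.snoc_castSucc, hne, hp i']
    · simpa [Fin.snoc_castSucc, Fin.castSucc_inj] using he i' j'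

lemma exists_orthonormal_family {Y : Type*} [NormedAddCommGroup Y] [NormedSpace ℝ Y]
    (S : Ell2 →L[ℝ] Y) (n : ℕ) {b : ℝ} (hb : 0 < b)
    (hba : ∀ A : Ell2 →L[ℝ] Y, FiniteDimensional ℝ (LinearMap.range (A : Ell2 →ₗ[ℝ] Y)) →
      Module.finrank ℝ (LinearMap.range (A : Ell2 →ₗ[ℝ] Y)) < n → b < ‖S - A‖) :
    ∃ e : Fin n → Ell2, Orthonormal ℝ e ∧ ∀ j, b ≤ ‖S (e j)‖ := by
  suffices h : ∀ k, k ≤ n → ∃ e : Fin k → Ell2, Orthonormal ℝ e ∧ ∀ j, b ≤ ‖S (e j)‖ from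
    h n le_rfl
  intro k
  induction k with
  | zero =>
    exact fun _ => ⟨Fin.elim0, orthonormal_iff_ite.2 (fun i => i.elim0), fun j => j.elim0⟩
  | succ k ih =>
    intro hk
    obtain ⟨e, he, hSe⟩ := ih (Nat.le_of_succ_le hk)
    set K := Submodule.span ℝ (Set.range e) with hK
    haveI : FiniteDimensional ℝ K := FiniteDimensional.span_of_finite ℝ (Set.finite_range e)
    set P : Ell2 →L[ℝ] Ell2 := K.subtypeL.comp (K.orthogonalProjectionOnto) with hP
    have hPmem : ∀ x : Ell2, P x ∈ K := fun x => (K.orthogonalProjectionOnto x).2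
    have hrange : LinearMap.range ((S.comp P : Ell2 →L[ℝ] Y) : Ell2 →ₗ[ℝ] Y) ≤ K.map (S : Ell2 →ₗ[ℝ] Y) := by
      rintro y ⟨x, rfl⟩
      exact ⟨P x, hPmem x, rfl⟩
    haveI : FiniteDimensional ℝ (LinearMap.range ((S.comp P : Ell2 →L[ℝ] Y) : Ell2 →ₗ[ℝ] Y)) :=
      Submodule.finiteDimensional_of_le hrange
    have hfr : Module.finrank ℝ (LinearMap.range ((S.comp P : Ell2 →L[ℝ] Y) : Ell2 →ₗ[ℝ] Y)) < n := by
      have h1 : Module.finrank ℝ (LinearMap.range ((S.comp P : Ell2 →L[ℝ] Y) : Ell2 →ₗ[ℝ] Y)) ≤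
          Module.finrank ℝ (K.map (S : Ell2 →ₗ[ℝ] Y)) := Submodule.finrank_mono hrange
      have h2 : Module.finrank ℝ (K.map (S : Ell2 →ₗ[ℝ] Y)) ≤ Module.finrank ℝ K :=
        Submodule.finrank_map_le _ _
      have h3 : Module.finrank ℝ K = k := by
        rw [hK, finrank_span_eq_card he.linearIndependent, Fintype.card_fin]
      omega
    have hB : b < ‖S - S.comp P‖ := hba (S.comp P) inferInstance hfr
    have hex : ∃ x : Ell2, ‖x‖ = 1 ∧ b < ‖(S - S.comp P) x‖ := by
      by_contra h
      push_neg at h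
      have := ContinuousLinearMap.opNorm_le_of_unit_norm hb.le h
      linarith
    obtain ⟨x, hx1, hxb⟩ := hex
    set y := x - P x with hy
    have hyK : y ∈ Kᗮ := Submodule.sub_starProjection_mem_orthogonal x
    have hSy : (S - S.comp P) x = S y := by simp [hy, map_sub]
    rw [hSy] at hxb
    have hy0 : y ≠ 0 := by
      intro h
      rw [h] at hxb
      simp only [map_zero, norm_zero] at hxb
      linarith
    have hynorm : ‖y‖ ≤ 1 := by
      have hinner : ⟪P x, y⟫ = 0 :=
        Submodule.inner_right_of_mem_orthogonal (hPmem x) hyK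
      have hxs : ‖x‖ ^ 2 = ‖P x‖ ^ 2 + ‖y‖ ^ 2 := by
        have hx' : x = P x + y := by simp [hy]
        nth_rewrite 1 [hx']
        rw [norm_add_sq_real, hinner]
        ring
      nlinarith [norm_nonneg (P x), norm_nonneg y]
    set u := ‖y‖⁻¹ • y with hu
    have hy0' : ‖y‖ ≠ 0 := norm_ne_zero_iff.2 hy0
    have hu1 : ‖u‖ = 1 := by
      rw [hu, norm_smul, norm_inv, norm_norm, inv_mul_cancel₀ hy0']
    have huK : u ∈ Kᗮ := Submodule.smul_mem _ _ hyK
    have hperp : ∀ j, ⟪e j, u⟫ = 0 := fun j =>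
      Submodule.inner_right_of_mem_orthogonal (Submodule.subset_span (Set.mem_range_self j)) huK
    have hSu : b ≤ ‖S u‖ := by
      have h1 : 1 ≤ ‖y‖⁻¹ := (one_le_inv₀ (norm_pos_iff.2 hy0)).2 hynorm
      have h2 : ‖S u‖ = ‖y‖⁻¹ * ‖S y‖ := by
        rw [hu, map_smul, norm_smul, norm_inv, norm_norm]
      nlinarith [norm_nonneg (S y)]
    refine ⟨Fin.snoc e u, orthonormal_snoc he hu1 hperp, fun j => ?_⟩
    refine Fin.lastCases ?_ (fun j' => ?_) j
    · simpa [Fin.snoc_last] using hSu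
    · simpa [Fin.snoc_castSucc] using hSe j'

lemma approx_bddBelow {X Y : Type*} [NormedAddCommGroup X] [NormedSpace ℝ X]
    [NormedAddCommGroup Y] [NormedSpace ℝ Y] (n : ℕ) (T : X →L[ℝ] Y) :
    BddBelow {c : ℝ | ∃ A : X →L[ℝ] Y, FiniteDimensional ℝ (LinearMap.range (A : X →ₗ[ℝ] Y)) ∧
      Module.finrank ℝ (LinearMap.range (A : X →ₗ[ℝ] Y)) < n ∧ ‖T - A‖ = c} :=
  ⟨0, by rintro c ⟨A, _, _, rfl⟩; exact norm_nonneg _⟩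

lemma key_bound {X Y : Type*} [NormedAddCommGroup X] [NormedSpace ℝ X]
    [NormedAddCommGroup Y] [NormedSpace ℝ Y]
    (r : ℝ) (hr : 2 ≤ r) (T : X →L[ℝ] Y) {C : ℝ} (hC : 0 ≤ C)
    (hsum : IsAbsSumming r 2 T C) (n : ℕ) (hn : 1 ≤ n)
    (A : Ell2 →L[ℝ] X) (hA : ‖A‖ ≤ 1) :
    (n : ℝ) ^ (1 / r : ℝ) * approxNumber n (T.comp A) ≤ C := by
  have hr0 : (0 : ℝ) < r := by linarith
  have hnpos : (0 : ℝ) < (n : ℝ) := by exact_mod_cast hn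
  have hnr : (0 : ℝ) < (n : ℝ) ^ (1 / r : ℝ) := Real.rpow_pos_of_pos hnpos _
  set S := T.comp A with hS
  set a := approxNumber n S with ha
  refine le_of_forall_pos_le_add (fun ε hε => ?_)
  set δ := ε / (n : ℝ) ^ (1 / r : ℝ) with hδ
  have hδpos : 0 < δ := div_pos hε hnr
  have hδε : (n : ℝ) ^ (1 / r : ℝ) * δ = ε := by
    rw [hδ]
    field_simp
  rcases le_or_gt a δ with hcase | hcase
  · have : (n : ℝ) ^ (1 / r : ℝ) * a ≤ (n : ℝ) ^ (1 / r : ℝ) * δ :=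
      mul_le_mul_of_nonneg_left hcase hnr.le
    rw [hδε] at this
    linarith
  · set b := a - δ with hb
    have hbpos : 0 < b := by simp [hb]; linarith
    have hba : ∀ B : Ell2 →L[ℝ] Y, FiniteDimensional ℝ (LinearMap.range (B : Ell2 →ₗ[ℝ] Y)) →
        Module.finrank ℝ (LinearMap.range (B : Ell2 →ₗ[ℝ] Y)) < n → b < ‖S - B‖ := by
      intro B h1 h2
      have hmem : ‖S - B‖ ∈ {c : ℝ | ∃ A : Ell2 →L[ℝ] Y, FiniteDimensional ℝ (LinearMap.range (A : Ell2 →ₗ[ℝ] Y)) ∧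
          Module.finrank ℝ (LinearMap.range (A : Ell2 →ₗ[ℝ] Y)) < n ∧ ‖S - A‖ = c} := ⟨B, h1, h2, rfl⟩
      have := csInf_le (approx_bddBelow n S) hmem
      have h3 : a ≤ ‖S - B‖ := this
      have : b < a := by simp [hb]; linarith
      linarith
    obtain ⟨e, he, hSe⟩ := exists_orthonormal_family S n hbpos hba
    have hmain := hsum n (fun j => A (e j))
    -- LHS lower bound
    have hL : (n : ℝ) ^ (1 / r : ℝ) * b ≤ (∑ j, ‖T (A (e j))‖ ^ r) ^ (1 / r : ℝ) := by
      have hterm : ∀ j : Fin n, b ^ r ≤ ‖T (A (e j))‖ ^ r := by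
        intro j
        exact Real.rpow_le_rpow hbpos.le (hSe j) hr0.le
      have hsumge : (n : ℝ) * b ^ r ≤ ∑ j : Fin n, ‖T (A (e j))‖ ^ r := by
        calc (n : ℝ) * b ^ r = ∑ _j : Fin n, b ^ r := by
              rw [Finset.sum_const, Finset.card_univ, Fintype.card_fin, nsmul_eq_mul]
          _ ≤ _ := Finset.sum_le_sum (fun j _ => hterm j)
      have h1 : ((n : ℝ) * b ^ r) ^ (1 / r : ℝ) ≤ (∑ j, ‖T (A (e j))‖ ^ r) ^ (1 / r : ℝ) :=
        Real.rpow_le_rpow (by positivity) hsumge (by positivity)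
      have h2 : ((n : ℝ) * b ^ r) ^ (1 / r : ℝ) = (n : ℝ) ^ (1 / r : ℝ) * b := by
        rw [Real.mul_rpow hnpos.le (Real.rpow_nonneg hbpos.le r)]
        congr 1
        rw [← Real.rpow_mul hbpos.le, mul_one_div_cancel hr0.ne', Real.rpow_one]
      rw [← h2]
      exact h1
    -- RHS upper bound
    have hR : (⨆ f : {f : X →L[ℝ] ℝ // ‖f‖ ≤ 1},
        (∑ j, |f.1 (A (e j))| ^ (2 : ℝ)) ^ (1 / (2 : ℝ) : ℝ)) ≤ 1 := by
      haveI : Nonempty {f : X →L[ℝ] ℝ // ‖f‖ ≤ 1} := ⟨⟨0, by simp⟩⟩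
      refine ciSup_le (fun f => ?_)
      set g := (f.1).comp A with hg
      have hgnorm : ‖g‖ ≤ 1 := by
        calc ‖g‖ ≤ ‖f.1‖ * ‖A‖ := ContinuousLinearMap.opNorm_comp_le _ _
          _ ≤ 1 * 1 := mul_le_mul f.2 hA (norm_nonneg _) zero_le_one
          _ = 1 := one_mul 1
      set v := (InnerProductSpace.toDual ℝ Ell2).symm g with hv
      have hvnorm : ‖v‖ ≤ 1 := by
        rw [hv, LinearIsometryEquiv.norm_map]
        exact hgnorm
      have hvinner : ∀ j : Fin n, g (e j) = ⟪v, e j⟫ := fun j =>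
        (InnerProductSpace.toDual_symm_apply).symm
      have hbessel : ∑ j : Fin n, ‖⟪e j, v⟫‖ ^ 2 ≤ ‖v‖ ^ 2 :=
        he.sum_inner_products_le v
      have hsumle : (∑ j, |f.1 (A (e j))| ^ (2 : ℝ)) ≤ 1 := by
        have heq : ∀ j : Fin n, |f.1 (A (e j))| ^ (2 : ℝ) = ‖⟪e j, v⟫‖ ^ 2 := by
          intro j
          have h1 : f.1 (A (e j)) = ⟪v, e j⟫ := hvinner j
          rw [h1, real_inner_comm v (e j), Real.norm_eq_abs, Real.rpow_two]
        calc (∑ j, |f.1 (A (e j))| ^ (2 : ℝ)) = ∑ j : Fin n, ‖⟪e j, v⟫‖ ^ 2 :=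
              Finset.sum_congr rfl (fun j _ => heq j)
          _ ≤ ‖v‖ ^ 2 := hbessel
          _ ≤ 1 := by nlinarith [norm_nonneg v]
      exact Real.rpow_le_one (by positivity) hsumle (by norm_num)
    have hmain2 : (∑ j, ‖T (A (e j))‖ ^ r) ^ (1 / r : ℝ) ≤ C := by
      calc (∑ j, ‖T (A (e j))‖ ^ r) ^ (1 / r : ℝ) ≤
          C * ⨆ f : {f : X →L[ℝ] ℝ // ‖f‖ ≤ 1},
            (∑ j, |f.1 (A (e j))| ^ (2 : ℝ)) ^ (1 / (2 : ℝ) : ℝ) := hmain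
        _ ≤ C * 1 := mul_le_mul_of_nonneg_left hR hC
        _ = C := mul_one C
    have : (n : ℝ) ^ (1 / r : ℝ) * b ≤ C := le_trans hL hmain2
    have hfin : (n : ℝ) ^ (1 / r : ℝ) * a = (n : ℝ) ^ (1 / r : ℝ) * b +
        (n : ℝ) ^ (1 / r : ℝ) * δ := by
      rw [hb]; ring
    rw [hfin, hδε]
    linarith

/-- If `2 ≤ r < ∞` and `T : X → Y` is absolutely `(r,2)`-summing, then
`x_n(T) ≤ n^{-1/r} · π_{r,2}(T)` for all `n ≥ 1`. -/
theorem weyl_le_summing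
    {X Y : Type*} [NormedAddCommGroup X] [NormedSpace ℝ X] [CompleteSpace X]
    [NormedAddCommGroup Y] [NormedSpace ℝ Y] [CompleteSpace Y]
    (r : ℝ) (hr : 2 ≤ r) (T : X →L[ℝ] Y)
    (hT : ∃ C : ℝ, 0 ≤ C ∧ IsAbsSumming r 2 T C)
    (n : ℕ) (hn : 1 ≤ n) :
    weylNumber n T ≤ (n : ℝ) ^ (-(1 / r)) * summingNorm r 2 T := by
  have hr0 : (0 : ℝ) < r := by linarith
  have hnpos : (0 : ℝ) < (n : ℝ) := by exact_mod_cast hn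
  have hnr : (0 : ℝ) < (n : ℝ) ^ (1 / r : ℝ) := Real.rpow_pos_of_pos hnpos _
  have hnrneg : (0 : ℝ) < (n : ℝ) ^ (-(1 / r) : ℝ) := Real.rpow_pos_of_pos hnpos _
  have hcancel : (n : ℝ) ^ (-(1 / r) : ℝ) * (n : ℝ) ^ (1 / r : ℝ) = 1 := by
    rw [← Real.rpow_add hnpos, neg_add_cancel, Real.rpow_zero]
  obtain ⟨C₀, hC₀, hsum₀⟩ := hT
  have hset : ({C : ℝ | 0 ≤ C ∧ IsAbsSumming r 2 T C}).Nonempty := ⟨C₀, hC₀, hsum₀⟩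
  haveI : Nonempty {A : Ell2 →L[ℝ] X // ‖A‖ ≤ 1} := ⟨⟨0, by simp⟩⟩
  refine ciSup_le (fun A => ?_)
  -- n^{1/r} * a ≤ summingNorm
  have h1 : (n : ℝ) ^ (1 / r : ℝ) * approxNumber n (T.comp A.1) ≤ summingNorm r 2 T := by
    refine le_csInf hset ?_
    rintro C ⟨hC, hsum⟩
    exact key_bound r hr T hC hsum n hn A.1 A.2
  have h2 : approxNumber n (T.comp A.1) =
      (n : ℝ) ^ (-(1 / r) : ℝ) * ((n : ℝ) ^ (1 / r : ℝ) * approxNumber n (T.comp A.1)) := by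
    rw [← mul_assoc, hcancel, one_mul]
  rw [h2]
  exact mul_le_mul_of_nonneg_left h1 hnrneg.le
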